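/- Let G be a group acting on a tree T without edge inversions, and suppose the action is k-acylindrical, meaning the pointwise stabilizer of any path of length k+1 in T is trivial. Let K_1 ≤ K_2 ≤ … be an ascending chain of subgroups of G such that each K_i fixes at least one vertex of T (is elliptic). Then there exists a vertex of T fixed by all K_i simultaneously. -/

import Mathlib

open SimpleGraph

namespace ExistsCommonFixedAux

variable {V : Type*} (T : SimpleGraph V)

private lemma list_map_eq_self {α : Type*} {f : α → α} :
    ∀ {l : List α}, l.map f = l → ∀ x ∈ l, f x = x
  | [], _, x, hx => absurd hx List.not_mem_nil
  | a :: t, h, x, hx => by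
    simp only [List.map_cons, List.cons.injEq] at h
    rcases List.mem_cons.mp hx with rfl | hx
    · exact h.1
    · exact list_map_eq_self h.2 x hx

private lemma path_length_eq_dist (hT : T.IsTree) {u v : V}
    (p : T.Walk u v) (hp : p.IsPath) : p.length = T.dist u v := by
  obtain ⟨q, hq, hqlen⟩ := hT.isConnected.exists_path_of_dist u v
  rw [(hT.existsUnique_path u v).unique hp hq, hqlen]

private lemma fixed_of_fixed_ends {G : Type*} [Group G] [MulAction G V]
    (hT : T.IsTree)
    (hadj : ∀ (g : G) (u v : V), T.Adj u v → T.Adj (g • u) (g • v))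
    (g : G) {u v : V} (hu : g • u = u) (hv : g • v = v)
    (p : T.Walk u v) (hp : p.IsPath) : ∀ x ∈ p.support, g • x = x := by
  let f : T →g T := ⟨fun x => g • x, fun h => hadj g _ _ h⟩
  have hinj : Function.Injective f := MulAction.injective g
  have hmap : ((p.map f).copy hu hv).IsPath := by
    rw [Walk.isPath_copy]
    exact Walk.map_isPath_of_injective hinj hp
  have heq : (p.map f).copy hu hv = p := (hT.existsUnique_path u v).unique hmap hp
  have hsupp : p.support.map (fun x => g • x) = p.support := by
    conv_rhs => rw [← heq]
    rw [Walk.support_copy, Walk.support_map]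
    rfl
  exact list_map_eq_self hsupp

private lemma dist_ne_of_adj (hT : T.IsTree) (x0 : V) {u v : V} (huv : T.Adj u v) :
    T.dist x0 u ≠ T.dist x0 v := by
  classical
  intro hEq
  obtain ⟨P, hP, hPlen⟩ := hT.isConnected.exists_path_of_dist x0 u
  by_cases hv : v ∈ P.support
  · have ht : (P.takeUntil v hv).IsPath := hP.takeUntil hv
    have h1 : (P.takeUntil v hv).length = T.dist x0 v := path_length_eq_dist T hT _ ht
    have h3 : (P.takeUntil v hv).length + (P.dropUntil v hv).length = P.length := by
      rw [← Walk.length_append, P.take_spec hv]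
    have h0 : (P.dropUntil v hv).length = 0 := by omega
    exact huv.ne (Walk.eq_of_length_eq_zero h0).symm
  · have hQ : (P.concat huv).IsPath := by
      rw [← Walk.isPath_reverse_iff, Walk.reverse_concat, Walk.cons_isPath_iff]
      exact ⟨hP.reverse, by simpa [Walk.support_reverse] using hv⟩
    have := path_length_eq_dist T hT _ hQ
    rw [Walk.length_concat, hPlen, hEq] at this
    omega

private lemma not_mem_support_of_lt (hT : T.IsTree) (x0 m : V) {a : V} (P : T.Walk x0 a)
    (h : P.length < T.dist x0 m) : m ∉ P.support := by
  classical
  intro hm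
  exact absurd ((SimpleGraph.dist_le (P.takeUntil m hm)).trans (P.length_takeUntil_le hm))
    (by omega)

private lemma no_peak (hT : T.IsTree) (x0 : V) {a m b : V}
    (ham : T.Adj a m) (hbm : T.Adj b m) (hab : a ≠ b)
    (hda : T.dist x0 m = T.dist x0 a + 1) (hdb : T.dist x0 m = T.dist x0 b + 1) : False := by
  classical
  obtain ⟨Pa, hPa, hPalen⟩ := hT.isConnected.exists_path_of_dist x0 a
  obtain ⟨Pb, hPb, hPblen⟩ := hT.isConnected.exists_path_of_dist x0 b
  have hma : m ∉ Pa.support := not_mem_support_of_lt T hT x0 m Pa (by omega)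
  have hmb : m ∉ Pb.support := not_mem_support_of_lt T hT x0 m Pb (by omega)
  have hW1 : (Pa.concat ham).IsPath := by
    rw [← Walk.isPath_reverse_iff, Walk.reverse_concat, Walk.cons_isPath_iff]
    exact ⟨hPa.reverse, by simpa [Walk.support_reverse] using hma⟩
  have hW2 : (Pb.concat hbm).IsPath := by
    rw [← Walk.isPath_reverse_iff, Walk.reverse_concat, Walk.cons_isPath_iff]
    exact ⟨hPb.reverse, by simpa [Walk.support_reverse] using hmb⟩
  have heq : Pa.concat ham = Pb.concat hbm := (hT.existsUnique_path x0 m).unique hW1 hW2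
  have h2 := congrArg (fun w => w.reverse.getVert 1) heq
  simp only [Walk.reverse_concat, Walk.getVert_cons_succ, Walk.getVert_zero] at h2
  exact hab h2

private lemma dist_add_length (hT : T.IsTree) (x0 : V) :
    ∀ (n : ℕ) {v w : V} (p : T.Walk v w), p.IsPath → p.length = n →
      (∀ x ∈ p.support, T.dist x0 v ≤ T.dist x0 x) →
      T.dist x0 w = T.dist x0 v + n := by
  classical
  intro n
  induction n using Nat.strong_induction_on with
  | _ n IH =>
    intro v w p hp hlen hmin
    cases p with
    | nil =>
      simp only [Walk.length_nil] at hlen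
      omega
    | @cons _ v' _ h q =>
      rw [Walk.length_cons] at hlen
      have hq : q.IsPath := hp.of_cons
      have hvq : v ∉ q.support := ((Walk.cons_isPath_iff h q).mp hp).2
      have hdv' : T.dist x0 v' = T.dist x0 v + 1 := by
        have hne := dist_ne_of_adj T hT x0 h
        have htri : T.dist x0 v' ≤ T.dist x0 v + T.dist v v' :=
          hT.isConnected.dist_triangle
        have hd1 : T.dist v v' = 1 := dist_eq_one_iff_adj.mpr h
        have hge : T.dist x0 v ≤ T.dist x0 v' :=
          hmin v' (by simp [Walk.support_cons, q.start_mem_support])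
        omega
      have hstep : ∀ x ∈ q.support, x ≠ w → T.dist x0 v + 1 ≤ T.dist x0 x := by
        intro x hx hxw
        have hxp : x ∈ (Walk.cons h q).support := by simp [Walk.support_cons, hx]
        have htp : ((Walk.cons h q).takeUntil x hxp).IsPath := hp.takeUntil hxp
        have hlen2 : ((Walk.cons h q).takeUntil x hxp).length
            + ((Walk.cons h q).dropUntil x hxp).length = n := by
          rw [← Walk.length_append, (Walk.cons h q).take_spec hxp, Walk.length_cons, hlen]
        have htlt : ((Walk.cons h q).takeUntil x hxp).length < n := by
          rcases Nat.lt_or_ge ((Walk.cons h q).takeUntil x hxp).length n with h' | h'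
          · exact h'
          · exact absurd (Walk.eq_of_length_eq_zero
              (show ((Walk.cons h q).dropUntil x hxp).length = 0 by omega)) hxw
        have hres := IH _ htlt ((Walk.cons h q).takeUntil x hxp) htp rfl
          (fun y hy => hmin y ((Walk.cons h q).support_takeUntil_subset hxp hy))
        have htne : ((Walk.cons h q).takeUntil x hxp).length ≠ 0 := by
          intro h0
          exact hvq ((Walk.eq_of_length_eq_zero h0) ▸ hx)
        omega
      have hwmem : w ∈ q.support := q.end_mem_support
      rcases Nat.lt_or_ge (T.dist x0 w) (T.dist x0 v + 1) with hw | hw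
      · -- dist x0 w = dist x0 v; derive contradiction
        exfalso
        have hdw : T.dist x0 w = T.dist x0 v :=
          le_antisymm (by omega) (hmin w (by simp [Walk.support_cons, hwmem]))
        have hrev := IH q.length (by omega) q.reverse hq.reverse (q.length_reverse)
          (fun x hx => by
            rw [hdw]
            exact hmin x (by
              rw [Walk.support_reverse, List.mem_reverse] at hx
              simp [Walk.support_cons, hx]))
        -- hrev : dist x0 v' = dist x0 w + q.length
        have hq1 : q.length = 1 := by omega
        have hv'w : T.Adj v' w := Walk.adj_of_length_eq_one hq1
        have hvw : v ≠ w := fun hvw => hvq (hvw ▸ hwmem)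
        exact no_peak T hT x0 h hv'w.symm hvw hdv' (by omega)
      · have hres := IH q.length (by omega) q hq rfl (fun x hx => by
          rw [hdv']
          rcases eq_or_ne x w with rfl | hxw
          · exact hw
          · exact hstep x hx hxw)
        omega

private lemma exists_prefix : ∀ {u v : V} (p : T.Walk u v) (n : ℕ), n ≤ p.length →
    ∃ (w : V) (q : T.Walk u w), q.length = n ∧ q.support.Sublist p.support := by
  intro u v p
  induction p with
  | nil =>
    intro n hn
    simp only [Walk.length_nil, Nat.le_zero] at hn
    subst hn
    exact ⟨_, Walk.nil, rfl, List.Sublist.refl _⟩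
  | @cons u v' w h p' ih =>
    intro n hn
    cases n with
    | zero =>
      refine ⟨_, Walk.nil, rfl, ?_⟩
      simp only [Walk.support_nil, Walk.support_cons]
      exact (List.nil_sublist _).cons₂ _
    | succ m =>
      obtain ⟨w, q, hql, hqs⟩ := ih m (by
        rw [Walk.length_cons] at hn; omega)
      refine ⟨w, Walk.cons h q, by simp [Walk.length_cons, hql], ?_⟩
      simp only [Walk.support_cons]
      exact hqs.cons₂ u

private lemma dist_le_k {G : Type*} [Group G] [MulAction G V] (hT : T.IsTree)
    (hadj : ∀ (g : G) (u v : V), T.Adj u v → T.Adj (g • u) (g • v))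
    (k : ℕ)
    (hacyl : ∀ (g : G) (u v : V) (p : T.Walk u v), p.IsPath → p.length = k + 1 →
      (∀ x ∈ p.support, g • x = x) → g = 1)
    (g : G) (hg : g ≠ 1) {u v : V}
    (hu : g • u = u) (hv : g • v = v) : T.dist u v ≤ k := by
  by_contra hlt
  push_neg at hlt
  obtain ⟨p, hp, hplen⟩ := hT.isConnected.exists_path_of_dist u v
  have hfix := fixed_of_fixed_ends T hT hadj g hu hv p hp
  obtain ⟨w, q, hql, hqs⟩ := exists_prefix T p (k + 1) (by omega)
  have hqp : q.IsPath := Walk.IsPath.mk' (hp.support_nodup.sublist hqs)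
  exact hg (hacyl g u w q hqp hql (fun x hx => hfix x (hqs.subset hx)))

end ExistsCommonFixedAux

open ExistsCommonFixedAux in
/-- Let `G` act on a tree `T` by graph automorphisms, without edge inversions, and
suppose the action is `k`-acylindrical: any element fixing pointwise a path of length
`k+1` is trivial.  If `K 1 ≤ K 2 ≤ …` is an ascending chain of elliptic subgroups
(each fixing some vertex), then there is a vertex fixed by all `K i` simultaneously. -/
theorem exists_common_fixed_vertex_of_elliptic_chain {V : Type*} {G : Type*} [Group G]
    [MulAction G V] (T : SimpleGraph V) (hT : T.IsTree)
    (hadj : ∀ (g : G) (u v : V), T.Adj u v → T.Adj (g • u) (g • v))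
    (hnoinv : ∀ (g : G) (u v : V), T.Adj u v → ¬(g • u = v ∧ g • v = u))
    (k : ℕ)
    (hacyl : ∀ (g : G) (u v : V) (p : T.Walk u v), p.IsPath → p.length = k + 1 →
      (∀ x ∈ p.support, g • x = x) → g = 1)
    (K : ℕ → Subgroup G) (hmono : Monotone K)
    (hell : ∀ i, ∃ v : V, ∀ g ∈ K i, g • v = v) :
    ∃ v : V, ∀ i, ∀ g ∈ K i, g • v = v := by
  by_cases htriv : ∀ i, ∀ g ∈ K i, g = (1 : G)
  · obtain ⟨v, -⟩ := hell 0
    exact ⟨v, fun i g hg => by rw [htriv i g hg, one_smul]⟩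
  push_neg at htriv
  obtain ⟨i0, g0, hg0mem, hg0⟩ := htriv
  have hellS : ∀ i : ℕ, ∃ v, ∀ g ∈ K (i0 + i), g • v = v := fun i => hell (i0 + i)
  obtain ⟨x0, hx0⟩ := hellS 0
  set Dset : ℕ → Set ℕ :=
    fun i => (fun v => T.dist x0 v) '' {v | ∀ g ∈ K (i0 + i), g • v = v} with hDset
  have hne : ∀ i, (Dset i).Nonempty := fun i => by
    obtain ⟨v, hv⟩ := hellS i
    exact ⟨T.dist x0 v, v, hv, rfl⟩
  set f : ℕ → ℕ := fun i => sInf (Dset i) with hf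
  have hmem : ∀ i, f i ∈ Dset i := fun i => Nat.sInf_mem (hne i)
  have hSanti : ∀ {i j : ℕ}, i ≤ j →
      {v : V | ∀ g ∈ K (i0 + j), g • v = v} ⊆ {v | ∀ g ∈ K (i0 + i), g • v = v} :=
    fun {i j} hij v hv g hg => hv g (hmono (by omega) hg)
  have hfmono : Monotone f := by
    intro i j hij
    obtain ⟨w, hw, hwd⟩ := hmem j
    exact hwd ▸ Nat.sInf_le ⟨w, hSanti hij hw, rfl⟩
  have hbound : ∀ i, f i ≤ k := by
    intro i
    obtain ⟨v, hv, hvd⟩ := hmem i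
    have hg0i : g0 ∈ K (i0 + 0) := hmono (by omega) hg0mem
    have hfx0 : g0 • x0 = x0 := hx0 g0 hg0i
    have hfv : g0 • v = v := hSanti (Nat.zero_le i) hv g0 hg0i
    exact hvd ▸ dist_le_k T hT hadj k hacyl g0 hg0 hfx0 hfv
  have hbdd : BddAbove (Set.range f) := ⟨k, by rintro _ ⟨i, rfl⟩; exact hbound i⟩
  obtain ⟨N, hN⟩ := Nat.sSup_mem (Set.range_nonempty f) hbdd
  have hstab : ∀ j, N ≤ j → f j = f N := fun j hj =>
    le_antisymm (hN ▸ le_csSup hbdd ⟨j, rfl⟩) (hfmono hj)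
  obtain ⟨vN, hvN, hvNd0⟩ := hmem N
  have hvNd : T.dist x0 vN = f N := hvNd0
  refine ⟨vN, fun i g hg => ?_⟩
  have hgi : g ∈ K (i0 + i) := hmono (by omega) hg
  rcases le_or_gt i N with hiN | hiN
  · exact hSanti hiN hvN g hgi
  · obtain ⟨w, hwS, hwd0⟩ := hmem i
    have hwd : T.dist x0 w = f i := hwd0
    have hwN : ∀ g' ∈ K (i0 + N), g' • w = w := fun g' hg' => hSanti hiN.le hwS g' hg'
    obtain ⟨p, hp, -⟩ := hT.isConnected.exists_path_of_dist vN w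
    have hsupfix : ∀ x ∈ p.support, ∀ g' ∈ K (i0 + N), g' • x = x := fun x hx g' hg' =>
      fixed_of_fixed_ends T hT hadj g' (hvN g' hg') (hwN g' hg') p hp x hx
    have hmin : ∀ x ∈ p.support, T.dist x0 vN ≤ T.dist x0 x := by
      intro x hx
      rw [hvNd]
      exact Nat.sInf_le ⟨x, fun g' hg' => hsupfix x hx g' hg', rfl⟩
    have hfin := dist_add_length T hT x0 p.length p hp rfl hmin
    have h0 : p.length = 0 := by
      have h2 : T.dist x0 w = T.dist x0 vN := by rw [hwd, hstab i hiN.le, hvNd]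
      omega
    have hvw : vN = w := Walk.eq_of_length_eq_zero h0
    rw [hvw]
    exact hwS g hgi
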